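/- Let X be a geodesic space in which geodesic triangles are δ-thin, and let γ, γ' : [0,T] → X be geodesics with γ(0) = γ'(0). If d(γ(t₀), im(γ')) ≤ K for some K > 0 and t₀ ∈ [0,T], then d(γ(t), γ'(t)) ≤ 2δ for all t ≤ t₀ − K − δ. -/
import Mathlib


open Set

/-- `f` is a unit-speed geodesic segment of length `T` from `x` to `y`. -/
def IsGeodesicSeg {X : Type*} [MetricSpace X] (f : ℝ → X) (T : ℝ) (x y : X) : Prop :=
  f 0 = x ∧ f T = y ∧ ∀ s ∈ Icc (0:ℝ) T, ∀ t ∈ Icc (0:ℝ) T, dist (f s) (f t) = |s - t|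

/-- `X` is a geodesic space: any two points are joined by a geodesic segment. -/
def IsGeodesicSpace (X : Type*) [MetricSpace X] : Prop :=
  ∀ x y : X, ∃ f : ℝ → X, IsGeodesicSeg f (dist x y) x y

/-- Geodesic triangles in `X` are `δ`-thin: every side is contained in the
`δ`-neighbourhood of the union of the other two sides. -/
def ThinTriangles (X : Type*) [MetricSpace X] (δ : ℝ) : Prop :=
  ∀ (a b c : X) (p q r : ℝ → X) (Tp Tq Tr : ℝ),
    IsGeodesicSeg p Tp a b → IsGeodesicSeg q Tq b c → IsGeodesicSeg r Tr a c →
    ∀ t ∈ Icc (0:ℝ) Tr, ∃ u, (u ∈ p '' Icc (0:ℝ) Tp ∨ u ∈ q '' Icc (0:ℝ) Tq) ∧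
      dist (r t) u ≤ δ

/-- (Bridson–Haefliger Lemma 1.15.) Let `X` be a geodesic space with `δ`-thin
geodesic triangles and `γ, γ' : [0,T] → X` unit-speed geodesics with
`γ 0 = γ' 0`. If `d(γ t₀, im γ') ≤ K` for some `K > 0` and `t₀ ∈ [0,T]`, then
`d(γ t, γ' t) ≤ 2δ` for all `t ≤ t₀ - K - δ`. -/
theorem bridson_lemma {X : Type*} [MetricSpace X] (hX : IsGeodesicSpace X)
    (δ : ℝ) (hδ : 0 ≤ δ) (hthin : ThinTriangles X δ)
    (T : ℝ) (γ γ' : ℝ → X)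
    (hγ : IsGeodesicSeg γ T (γ 0) (γ T)) (hγ' : IsGeodesicSeg γ' T (γ' 0) (γ' T))
    (h0 : γ 0 = γ' 0)
    (K : ℝ) (hK : 0 < K) (t₀ : ℝ) (ht₀ : t₀ ∈ Icc (0:ℝ) T)
    (hclose : Metric.infDist (γ t₀) (γ' '' Icc (0:ℝ) T) ≤ K) :
    ∀ t ∈ Icc (0:ℝ) T, t ≤ t₀ - K - δ → dist (γ t) (γ' t) ≤ 2 * δ := by
  intro t ht htle
  obtain ⟨ht0, htT⟩ := ht
  obtain ⟨ht₀0, ht₀T⟩ := ht₀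
  have hdγ := hγ.2.2
  have hdγ' := hγ'.2.2
  -- continuity of γ' on [0,T]
  have hlip : LipschitzOnWith 1 γ' (Icc (0:ℝ) T) := by
    intro a ha b hb
    rw [edist_dist, edist_dist, hdγ' a ha b hb]
    simp [Real.dist_eq]
  have hcomp : IsCompact (γ' '' Icc (0:ℝ) T) :=
    isCompact_Icc.image_of_continuousOn hlip.continuousOn
  have hne : (γ' '' Icc (0:ℝ) T).Nonempty :=
    ⟨γ' 0, mem_image_of_mem _ ⟨le_refl 0, le_trans ht₀0 ht₀T⟩⟩
  obtain ⟨y, hy, hyd⟩ := hcomp.exists_infDist_eq_dist hne (γ t₀)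
  obtain ⟨s', hs', rfl⟩ := hy
  have hdist_s' : dist (γ t₀) (γ' s') ≤ K := by rw [← hyd]; exact hclose
  -- bridge geodesic from γ' s' to γ t₀
  obtain ⟨q, hq⟩ := hX (γ' s') (γ t₀)
  set D := dist (γ' s') (γ t₀) with hD
  have hDK : D ≤ K := by rw [hD, dist_comm]; exact hdist_s'
  -- the three sides of the triangle with vertices γ 0, γ' s', γ t₀
  have hp : IsGeodesicSeg γ' s' (γ 0) (γ' s') := by
    refine ⟨h0.symm ▸ hγ'.1, rfl, fun a ha b hb => ?_⟩
    exact hdγ' a ⟨ha.1, ha.2.trans hs'.2⟩ b ⟨hb.1, hb.2.trans hs'.2⟩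
  have hr : IsGeodesicSeg γ t₀ (γ 0) (γ t₀) := by
    refine ⟨rfl, rfl, fun a ha b hb => ?_⟩
    exact hdγ a ⟨ha.1, ha.2.trans ht₀T⟩ b ⟨hb.1, hb.2.trans ht₀T⟩
  have htt₀ : t ≤ t₀ := by linarith
  obtain ⟨u, hu, hud⟩ := hthin (γ 0) (γ' s') (γ t₀) γ' q γ s' D t₀ hp hq hr t ⟨ht0, htt₀⟩
  -- reduce both cases to: ∃ s ∈ [0, s'], dist (γ t) (γ' s) ≤ δ
  have key : ∃ s, s ∈ Icc (0:ℝ) s' ∧ dist (γ t) (γ' s) ≤ δ := by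
    rcases hu with h | h
    · obtain ⟨s, hs, rfl⟩ := h
      exact ⟨s, hs, hud⟩
    · obtain ⟨v, hv, rfl⟩ := h
      -- u on the bridge; show v = 0, so u = γ' s'
      have hqd := hq.2.2
      have h1 : dist (γ t) (γ t₀) = t₀ - t := by
        rw [hdγ t ⟨ht0, htT⟩ t₀ ⟨ht₀0, ht₀T⟩, abs_of_nonpos (by linarith)]; ring
      have h2 : dist (q v) (γ t₀) = D - v := by
        have := hqd v hv D ⟨dist_nonneg, le_refl D⟩
        rw [hq.2.1] at this
        rw [this, abs_of_nonpos (by linarith [hv.2])]; ring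
      have h3 : t₀ - t ≤ δ + (D - v) := by
        calc t₀ - t = dist (γ t) (γ t₀) := h1.symm
          _ ≤ dist (γ t) (q v) + dist (q v) (γ t₀) := dist_triangle _ _ _
          _ ≤ δ + (D - v) := by rw [h2]; linarith
      have hv0 : v = 0 := le_antisymm (by linarith) hv.1
      have : q v = γ' s' := by rw [hv0, hq.1]
      rw [this] at hud
      exact ⟨s', ⟨hs'.1, le_refl s'⟩, hud⟩
  obtain ⟨s, hs, hsd⟩ := key
  have hsT : s ∈ Icc (0:ℝ) T := ⟨hs.1, hs.2.trans hs'.2⟩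
  have hxt : dist (γ 0) (γ t) = t := by
    rw [hdγ 0 ⟨le_refl 0, le_trans ht₀0 ht₀T⟩ t ⟨ht0, htT⟩, abs_of_nonpos (by linarith)]; ring
  have hxs : dist (γ 0) (γ' s) = s := by
    rw [h0, hdγ' 0 ⟨le_refl 0, le_trans ht₀0 ht₀T⟩ s hsT, abs_of_nonpos (by linarith [hs.1])]
    ring
  have hts : |t - s| ≤ δ := by
    have := abs_dist_sub_le (γ t) (γ' s) (γ 0)
    rw [dist_comm (γ t) (γ 0), dist_comm (γ' s) (γ 0), hxt, hxs] at this
    exact this.trans hsd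
  calc dist (γ t) (γ' t) ≤ dist (γ t) (γ' s) + dist (γ' s) (γ' t) := dist_triangle _ _ _
    _ ≤ δ + |s - t| := by
        rw [hdγ' s hsT t ⟨ht0, htT⟩]; linarith
    _ ≤ 2 * δ := by rw [abs_sub_comm]; linarith
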